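/- In the pair-HMM, suppose the marginals of the diagonal emission distribution satisfy h_X = f and h_Y = g (Assumption 3). Then for any integers n, m, any time t, and any sequence x_{1:n} of letters, P(Z_t = (n,m), X_{1:n} = x_{1:n}) = P(Z_t = (n,m)) · ∏_{i=1}^n f(x_i); and symmetrically P(Z_t = (n,m), Y_{1:m} = y_{1:m}) = P(Z_t = (n,m)) · ∏_{j=1}^m g(y_j). -/

import Mathlib

open Finset Filter MeasureTheory
open scoped Classical

noncomputable section

/-- Hidden state space: 0 = horizontal step (1,0), 1 = vertical step (0,1), 2 = diagonal step (1,1). -/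
abbrev E : Type := Fin 3

/-- The lattice step associated with each hidden state. -/
def stepv : E → ℕ × ℕ := ![(1,0), (0,1), (1,1)]

/-- Number of X-letters emitted by the first `t` hidden steps. -/
def Nn (u : ℕ → E) (t : ℕ) : ℕ := ∑ i ∈ Finset.range t, (stepv (u i)).1

/-- Number of Y-letters emitted by the first `t` hidden steps. -/
def Mm (u : ℕ → E) (t : ℕ) : ℕ := ∑ i ∈ Finset.range t, (stepv (u i)).2

/-- Extend a finite hidden path to an infinite one (junk value 0 beyond `l`). -/
def extPath {l : ℕ} (u : Fin l → E) : ℕ → E := fun i => if h : i < l then u ⟨i, h⟩ else 0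

/-- Conditional probability of the emitted letters for hidden steps `s, …, t-1`
(0-indexed) along path `u`, with observation streams `x` and `y` (0-indexed). -/
def emit {A : Type} (f g : A → ℝ) (h : A → A → ℝ) (x y : ℕ → A) (u : ℕ → E) (s t : ℕ) : ℝ :=
  ∏ i ∈ Finset.Ico s t,
    if u i = 0 then f (x (Nn u i))
    else if u i = 1 then g (y (Mm u i))
    else h (x (Nn u i)) (y (Mm u i))

/-- Probability of a finite hidden path under initial law `mu` and transition matrix `pr`. -/
def pathProb (pr : E → E → ℝ) (mu : E → ℝ) {l : ℕ} (u : Fin l → E) : ℝ :=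
  mu (extPath u 0) * ∏ i ∈ Finset.range (l - 1), pr (extPath u i) (extPath u (i + 1))

/-- `P_θ(ε_{1:t} ∈ E_{n,m} with |path| = t, X_{1:n} = x, Y_{1:m} = y)`:
joint probability of a hidden path of length `t` ending at `(n,m)` together with
the emitted observations. -/
def jointProb {A : Type} (pr : E → E → ℝ) (mu : E → ℝ) (f g : A → ℝ) (h : A → A → ℝ)
    (x y : ℕ → A) (t n m : ℕ) : ℝ :=
  ∑ u : Fin t → E,
    if Nn (extPath u) t = n ∧ Mm (extPath u) t = m then
      pathProb pr mu u * emit f g h x y (extPath u) 0 t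
    else 0

/-- `Q_θ(x_{1:n}, y_{1:m}) = Σ_{e ∈ E_{n,m}} P_θ(ε_{1:|e|} = e, x_{1:n}, y_{1:m})`:
all hidden paths ending at `(n,m)` have length ≤ n+m. -/
def Qprob {A : Type} (pr : E → E → ℝ) (mu : E → ℝ) (f g : A → ℝ) (h : A → A → ℝ)
    (x y : ℕ → A) (n m : ℕ) : ℝ :=
  ∑ l ∈ Finset.range (n + m + 1), jointProb pr mu f g h x y l n m

/-- `P_θ(Z_t = (n,m))`. -/
def walkProb (pr : E → E → ℝ) (mu : E → ℝ) (t n m : ℕ) : ℝ :=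
  ∑ u : Fin t → E,
    if Nn (extPath u) t = n ∧ Mm (extPath u) t = m then pathProb pr mu u else 0

/-- `P_θ(∃ s ≥ 1, Z_s = (n,m))` (the walk is strictly increasing in `n+m`, so the
events for different path lengths are disjoint and the probability is a sum). -/
def hitProb (pr : E → E → ℝ) (mu : E → ℝ) (n m : ℕ) : ℝ :=
  ∑ l ∈ Finset.Icc 1 (n + m), walkProb pr mu l n m

end

/-- Extend a finite sequence of letters to an infinite stream (junk `default` beyond `l`). -/
noncomputable def extObs {A : Type} [Inhabited A] {l : ℕ} (v : Fin l → A) : ℕ → A :=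
  fun i => if h : i < l then v ⟨i, h⟩ else default

set_option linter.unusedSectionVars false

section Aux

variable {A : Type} [Fintype A] [Inhabited A]

lemma E_cases : ∀ e : E, e = 0 ∨ e = 1 ∨ e = 2 := by decide

lemma Nn_succ (u : ℕ → E) (t : ℕ) : Nn u (t + 1) = Nn u t + (stepv (u t)).1 :=
  Finset.sum_range_succ _ t

lemma Mm_succ (u : ℕ → E) (t : ℕ) : Mm u (t + 1) = Mm u t + (stepv (u t)).2 :=
  Finset.sum_range_succ _ t

lemma Nn_mono (u : ℕ → E) {i j : ℕ} (hij : i ≤ j) : Nn u i ≤ Nn u j :=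
  Finset.sum_le_sum_of_subset (Finset.range_subset_range.2 hij)

lemma Mm_mono (u : ℕ → E) {i j : ℕ} (hij : i ≤ j) : Mm u i ≤ Mm u j :=
  Finset.sum_le_sum_of_subset (Finset.range_subset_range.2 hij)

lemma Mm_lt (u : ℕ → E) {i t : ℕ} (hit : i < t) (hui : u i ≠ 0) : Mm u i < Mm u t := by
  have h2 : (stepv (u i)).2 = 1 := by
    rcases E_cases (u i) with h | h | h <;> simp [h, stepv] at hui ⊢
  calc Mm u i < Mm u i + 1 := Nat.lt_succ_self _
    _ = Mm u (i + 1) := by rw [Mm_succ, h2]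
    _ ≤ Mm u t := Mm_mono u hit

lemma Nn_lt (u : ℕ → E) {i t : ℕ} (hit : i < t) (hui : u i ≠ 1) : Nn u i < Nn u t := by
  have h1 : (stepv (u i)).1 = 1 := by
    rcases E_cases (u i) with h | h | h <;> simp [h, stepv] at hui ⊢
  calc Nn u i < Nn u i + 1 := Nat.lt_succ_self _
    _ = Nn u (i + 1) := by rw [Nn_succ, h1]
    _ ≤ Nn u t := Nn_mono u hit

lemma extObs_lt {l : ℕ} (v : Fin l → A) {i : ℕ} (hi : i < l) : extObs v i = v ⟨i, hi⟩ :=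
  dif_pos hi

lemma emit_congr_y (f g : A → ℝ) (h : A → A → ℝ) (x : ℕ → A) (u : ℕ → E) {y y' : ℕ → A}
    (t : ℕ) (hy : ∀ j < Mm u t, y j = y' j) :
    emit f g h x y u 0 t = emit f g h x y' u 0 t := by
  refine Finset.prod_congr rfl fun i hi => ?_
  rw [Finset.mem_Ico] at hi
  split_ifs with h0 h1
  · rfl
  · rw [hy _ (Mm_lt u hi.2 h0)]
  · rw [hy _ (Mm_lt u hi.2 h0)]

lemma emit_congr_x (f g : A → ℝ) (h : A → A → ℝ) (y : ℕ → A) (u : ℕ → E) {x x' : ℕ → A}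
    (t : ℕ) (hx : ∀ j < Nn u t, x j = x' j) :
    emit f g h x y u 0 t = emit f g h x' y u 0 t := by
  refine Finset.prod_congr rfl fun i hi => ?_
  rw [Finset.mem_Ico] at hi
  split_ifs with h0 h1
  · rw [hx _ (Nn_lt u hi.2 (by simp [h0]))]
  · rfl
  · rw [hx _ (Nn_lt u hi.2 h1)]

lemma emit_succ (f g : A → ℝ) (h : A → A → ℝ) (x y : ℕ → A) (u : ℕ → E) (t : ℕ) :
    emit f g h x y u 0 (t + 1) = emit f g h x y u 0 t *
      (if u t = 0 then f (x (Nn u t)) else if u t = 1 then g (y (Mm u t))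
        else h (x (Nn u t)) (y (Mm u t))) := by
  unfold emit
  rw [Finset.prod_Ico_succ_top (Nat.zero_le _)]

/-- Split a sum over `Fin (m+1) → A` into last coordinate and initial segment. -/
lemma sum_snoc_split (m : ℕ) (F : (Fin (m + 1) → A) → ℝ) :
    (∑ yv : Fin (m + 1) → A, F yv)
      = ∑ w : Fin m → A, ∑ a : A, F (Fin.snoc w a) := by
  rw [Fintype.sum_equiv (Fin.snocEquiv (fun _ : Fin (m + 1) => A)).symm
    F (fun p => F (Fin.snoc p.2 p.1)) (fun yv => by
      simp [Fin.snocEquiv])]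
  rw [Fintype.sum_prod_type]
  exact Finset.sum_comm

lemma extObs_snoc_lt {m : ℕ} (w : Fin m → A) (a : A) {j : ℕ} (hj : j < m) :
    extObs (Fin.snoc w a : Fin (m+1) → A) j = extObs w j := by
  rw [extObs_lt _ (hj.trans (Nat.lt_succ_self _)), extObs_lt _ hj]
  exact Fin.snoc_castSucc _ _ ⟨j, hj⟩

lemma extObs_snoc_last {m : ℕ} (w : Fin m → A) (a : A) :
    extObs (Fin.snoc w a : Fin (m+1) → A) m = a := by
  rw [extObs_lt _ (Nat.lt_succ_self _)]
  exact Fin.snoc_last _ _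

lemma sum_emit_y (f g : A → ℝ) (h : A → A → ℝ)
    (hgsum : ∑ a, g a = 1) (hX : ∀ a, ∑ b, h a b = f a) (x : ℕ → A) (u : ℕ → E) :
    ∀ t : ℕ, (∑ yv : Fin (Mm u t) → A, emit f g h x (extObs yv) u 0 t)
      = ∏ i ∈ Finset.range (Nn u t), f (x i) := by
  intro t
  induction t with
  | zero =>
    simp [Mm, Nn, emit]
    exact Finset.card_eq_one.2 ⟨fun i => absurd i.2 (by simp [Mm]), Finset.eq_singleton_iff_unique_mem.2 ⟨Finset.mem_univ _, fun v _ => funext fun i => absurd i.2 (by simp [Mm])⟩⟩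
  | succ t ih =>
      rw [Finset.sum_congr rfl fun yv _ => emit_succ f g h x (extObs yv) u t]
      rcases E_cases (u t) with h0 | h1 | h2
      · have hm : Mm u (t + 1) = Mm u t := by simp [Mm_succ, h0, stepv]
        have hn : Nn u (t + 1) = Nn u t + 1 := by simp [Nn_succ, h0, stepv]
        rw [hm, hn]
        simp only [h0, eq_self_iff_true, if_true]
        rw [← Finset.sum_mul, ih, Finset.prod_range_succ]
      · have hm : Mm u (t + 1) = Mm u t + 1 := by simp [Mm_succ, h1, stepv]
        have hn : Nn u (t + 1) = Nn u t := by simp [Nn_succ, h1, stepv]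
        rw [hm, hn]
        simp only [h1, show ((1 : E) = 0) = False from by decide, show ((1 : E) = 1) = True from by decide, if_true, if_false]
        rw [sum_snoc_split]
        have : ∀ (w : Fin (Mm u t) → A) (a : A),
            emit f g h x (extObs (Fin.snoc w a : Fin (Mm u t + 1) → A)) u 0 t *
              g (extObs (Fin.snoc w a : Fin (Mm u t + 1) → A) (Mm u t))
            = emit f g h x (extObs w) u 0 t * g a := by
          intro w a
          rw [extObs_snoc_last, emit_congr_y f g h x u t (fun j hj => extObs_snoc_lt w a hj)]
        simp only [this]
        simp only [← Finset.mul_sum, hgsum, mul_one]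
        exact ih
      · have hm : Mm u (t + 1) = Mm u t + 1 := by simp [Mm_succ, h2, stepv]
        have hn : Nn u (t + 1) = Nn u t + 1 := by simp [Nn_succ, h2, stepv]
        rw [hm, hn]
        simp only [h2, show ((2 : E) = 0) = False from by decide, show ((2 : E) = 1) = False from by decide, if_false]
        rw [sum_snoc_split]
        have : ∀ (w : Fin (Mm u t) → A) (a : A),
            emit f g h x (extObs (Fin.snoc w a : Fin (Mm u t + 1) → A)) u 0 t *
              h (x (Nn u t)) (extObs (Fin.snoc w a : Fin (Mm u t + 1) → A) (Mm u t))
            = emit f g h x (extObs w) u 0 t * h (x (Nn u t)) a := by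
          intro w a
          rw [extObs_snoc_last, emit_congr_y f g h x u t (fun j hj => extObs_snoc_lt w a hj)]
        simp only [this]
        simp only [← Finset.mul_sum, hX, ← Finset.sum_mul, ih, Finset.prod_range_succ]

lemma sum_emit_x (f g : A → ℝ) (h : A → A → ℝ)
    (hfsum : ∑ a, f a = 1) (hY : ∀ b, ∑ a, h a b = g b) (y : ℕ → A) (u : ℕ → E) :
    ∀ t : ℕ, (∑ xv : Fin (Nn u t) → A, emit f g h (extObs xv) y u 0 t)
      = ∏ j ∈ Finset.range (Mm u t), g (y j) := by
  intro t
  induction t with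
  | zero =>
    simp [Mm, Nn, emit]
    exact Finset.card_eq_one.2 ⟨fun i => absurd i.2 (by simp [Nn]), Finset.eq_singleton_iff_unique_mem.2 ⟨Finset.mem_univ _, fun v _ => funext fun i => absurd i.2 (by simp [Nn])⟩⟩
  | succ t ih =>
      rw [Finset.sum_congr rfl fun xv _ => emit_succ f g h (extObs xv) y u t]
      rcases E_cases (u t) with h0 | h1 | h2
      · have hm : Mm u (t + 1) = Mm u t := by simp [Mm_succ, h0, stepv]
        have hn : Nn u (t + 1) = Nn u t + 1 := by simp [Nn_succ, h0, stepv]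
        rw [hm, hn]
        simp only [h0, eq_self_iff_true, if_true]
        rw [sum_snoc_split]
        have : ∀ (w : Fin (Nn u t) → A) (a : A),
            emit f g h (extObs (Fin.snoc w a : Fin (Nn u t + 1) → A)) y u 0 t *
              f (extObs (Fin.snoc w a : Fin (Nn u t + 1) → A) (Nn u t))
            = emit f g h (extObs w) y u 0 t * f a := by
          intro w a
          rw [extObs_snoc_last, emit_congr_x f g h y u t (fun j hj => extObs_snoc_lt w a hj)]
        simp only [this]
        simp only [← Finset.mul_sum, hfsum, mul_one]
        exact ih
      · have hm : Mm u (t + 1) = Mm u t + 1 := by simp [Mm_succ, h1, stepv]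
        have hn : Nn u (t + 1) = Nn u t := by simp [Nn_succ, h1, stepv]
        rw [hm, hn]
        simp only [h1, show ((1 : E) = 0) = False from by decide,
          show ((1 : E) = 1) = True from by decide, if_true, if_false]
        rw [← Finset.sum_mul, ih, Finset.prod_range_succ]
      · have hm : Mm u (t + 1) = Mm u t + 1 := by simp [Mm_succ, h2, stepv]
        have hn : Nn u (t + 1) = Nn u t + 1 := by simp [Nn_succ, h2, stepv]
        rw [hm, hn]
        simp only [h2, show ((2 : E) = 0) = False from by decide,
          show ((2 : E) = 1) = False from by decide, if_false]
        rw [sum_snoc_split]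
        have : ∀ (w : Fin (Nn u t) → A) (a : A),
            emit f g h (extObs (Fin.snoc w a : Fin (Nn u t + 1) → A)) y u 0 t *
              h (extObs (Fin.snoc w a : Fin (Nn u t + 1) → A) (Nn u t)) (y (Mm u t))
            = emit f g h (extObs w) y u 0 t * h a (y (Mm u t)) := by
          intro w a
          rw [extObs_snoc_last, emit_congr_x f g h y u t (fun j hj => extObs_snoc_lt w a hj)]
        simp only [this]
        have hswap : ∀ w : Fin (Nn u t) → A,
            (∑ a : A, emit f g h (extObs w) y u 0 t * h a (y (Mm u t)))
              = emit f g h (extObs w) y u 0 t * g (y (Mm u t)) := by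
          intro w
          rw [← Finset.mul_sum, hY]
        simp only [hswap]
        rw [← Finset.sum_mul, ih, Finset.prod_range_succ]

end Aux

theorem marginal_observation_law {A : Type} [Fintype A] [Inhabited A]
    (pr : E → E → ℝ) (mu : E → ℝ) (f g : A → ℝ) (h : A → A → ℝ)
    (hfsum : ∑ a, f a = 1) (hgsum : ∑ a, g a = 1)
    (hX : ∀ a, ∑ b, h a b = f a) (hY : ∀ b, ∑ a, h a b = g b)
    (t n m : ℕ) :
    (∀ x : ℕ → A,
      (∑ u : Fin t → E,
        if Nn (extPath u) t = n ∧ Mm (extPath u) t = m then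
          pathProb pr mu u *
            ∑ yv : Fin m → A, emit f g h x (extObs yv) (extPath u) 0 t
        else 0)
      = walkProb pr mu t n m * ∏ i ∈ Finset.range n, f (x i)) ∧
    (∀ y : ℕ → A,
      (∑ u : Fin t → E,
        if Nn (extPath u) t = n ∧ Mm (extPath u) t = m then
          pathProb pr mu u *
            ∑ xv : Fin n → A, emit f g h (extObs xv) y (extPath u) 0 t
        else 0)
      = walkProb pr mu t n m * ∏ j ∈ Finset.range m, g (y j)) := by
  constructor
  · intro x
    rw [walkProb, Finset.sum_mul]
    refine Finset.sum_congr rfl fun u _ => ?_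
    split_ifs with hc
    · obtain ⟨hN, hM⟩ := hc
      rw [← hM, ← hN, sum_emit_y f g h hgsum hX x (extPath u) t]
    · rw [zero_mul]
  · intro y
    rw [walkProb, Finset.sum_mul]
    refine Finset.sum_congr rfl fun u _ => ?_
    split_ifs with hc
    · obtain ⟨hN, hM⟩ := hc
      rw [← hM, ← hN, sum_emit_x f g h hfsum hY y (extPath u) t]
    · rw [zero_mul]
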